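/- For every j ∈ ℤ and every (ξ₁, ξ₂) ∈ ℝ² with 0 < |z − π j| ≤ 1/2, where z = ξ₁ + i ξ₂, one has |X(ξ₁, ξ₂) − (log |z − π j| + log 2 − ξ₂)| ≤ |z − π j|². (This is the representation (2.12): near each point ξ^{(j)} = (π j, 0) one has X(ξ) = ln ρ + ln 2 − ξ₂ + X̃(ξ) with ρ = |ξ − ξ^{(j)}| and X̃(ξ) = O(ρ²).) -/

import Mathlib

/-- The boundary-layer function `X(ξ) = Re ln sin z + ln 2 − ξ₂`, `z = ξ₁ + i ξ₂`. -/
noncomputable def boundaryLayerX (ξ : ℝ × ℝ) : ℝ :=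
  Real.log (‖Complex.sin ((ξ.1 : ℂ) + (ξ.2 : ℂ) * Complex.I)‖) +
    Real.log 2 - ξ.2

lemma sin_lin_bound (w : ℂ) (hw : ‖w‖ ≤ 1) :
    ‖Complex.sin w - w‖ ≤ ‖w‖ ^ 3 * (2/9) := by
  have hx : ‖w * Complex.I‖ ≤ 1 := by simpa using hw
  have hx' : ‖-w * Complex.I‖ ≤ 1 := by simpa using hw
  have h1 := Complex.exp_bound hx (by norm_num : 0 < 3)
  have h2 := Complex.exp_bound hx' (by norm_num : 0 < 3)
  have hs : ∀ x : ℂ, ∑ m ∈ Finset.range 3, x ^ m / (m.factorial : ℂ) = 1 + x + x ^ 2 / 2 := by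
    intro x
    simp [Finset.sum_range_succ, Nat.factorial]
  rw [hs] at h1 h2
  norm_num [Nat.factorial] at h1 h2
  have key : Complex.sin w - w =
      ((Complex.exp (-(w * Complex.I)) - (1 + -(w * Complex.I) + (w * Complex.I) ^ 2 / 2)) -
       (Complex.exp (w * Complex.I) - (1 + w * Complex.I + (w * Complex.I) ^ 2 / 2))) *
        Complex.I / 2 := by
    rw [Complex.sin, neg_mul]
    linear_combination (-w) * Complex.I_sq
  rw [key]
  rw [norm_div, norm_mul, Complex.norm_I, mul_one, Complex.norm_two]
  calc ‖_‖ / 2 ≤ (‖w‖ ^ 3 * (2/9) + ‖w‖ ^ 3 * (2/9)) / 2 := by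
        gcongr
        exact (norm_sub_le _ _).trans (add_le_add h2 h1)
    _ = ‖w‖ ^ 3 * (2/9) := by ring

lemma log_sin_bound (w : ℂ) (h0 : 0 < ‖w‖) (h : ‖w‖ ≤ 1/2) :
    |Real.log (‖Complex.sin w‖) - Real.log (‖w‖)| ≤ ‖w‖ ^ 2 := by
  set ρ := ‖w‖ with hρdef
  set a := ‖Complex.sin w‖ with hadef
  have hd : |a - ρ| ≤ ρ ^ 3 * (2/9) :=
    (abs_norm_sub_norm_le _ _).trans (sin_lin_bound w (h.trans (by norm_num)))
  have hρ2 : ρ ^ 2 ≤ 1/4 := by nlinarith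
  have hr : ρ ^ 3 * (2/9) ≤ ρ / 18 := by nlinarith [mul_le_mul_of_nonneg_left hρ2 h0.le]
  have hd' : |a - ρ| ≤ ρ / 18 := hd.trans hr
  have ha : 17 * ρ / 18 ≤ a := by
    have := abs_le.mp hd'
    linarith [this.1]
  have ha0 : 0 < a := lt_of_lt_of_le (by linarith) ha
  rw [← Real.log_div (ne_of_gt ha0) (ne_of_gt h0)]
  rw [abs_le]
  constructor
  · have hlog : Real.log (ρ / a) ≤ ρ / a - 1 := Real.log_le_sub_one_of_pos (by positivity)
    have : Real.log (ρ / a) = -Real.log (a / ρ) := by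
      rw [← Real.log_inv, inv_div]
    rw [this] at hlog
    have hfrac : ρ / a - 1 ≤ ρ ^ 2 := by
      rw [div_sub_one (ne_of_gt ha0), div_le_iff₀ ha0]
      have h1 : ρ - a ≤ ρ ^ 3 * (2/9) := by linarith [abs_le.mp hd |>.1]
      nlinarith
    linarith
  · have hlog : Real.log (a / ρ) ≤ a / ρ - 1 := Real.log_le_sub_one_of_pos (by positivity)
    have hfrac : a / ρ - 1 ≤ ρ ^ 2 := by
      rw [div_sub_one (ne_of_gt h0), div_le_iff₀ h0]
      have h1 : a - ρ ≤ ρ ^ 3 * (2/9) := (abs_le.mp hd).2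
      nlinarith
    linarith

/-- Representation (2.12): near each point `ξ^{(j)} = (π j, 0)` one has
`X(ξ) = ln ρ + ln 2 − ξ₂ + O(ρ²)` with `ρ = |z − π j|`, `z = ξ₁ + i ξ₂`. -/
theorem boundaryLayerX_local_representation (j : ℤ) (ξ₁ ξ₂ : ℝ)
    (h1 : 0 < ‖((ξ₁ : ℂ) + (ξ₂ : ℂ) * Complex.I) - (Real.pi : ℂ) * (j : ℂ)‖)
    (h2 : ‖((ξ₁ : ℂ) + (ξ₂ : ℂ) * Complex.I) - (Real.pi : ℂ) * (j : ℂ)‖ ≤ 1 / 2) :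
    |boundaryLayerX (ξ₁, ξ₂) -
        (Real.log (‖((ξ₁ : ℂ) + (ξ₂ : ℂ) * Complex.I) - (Real.pi : ℂ) * (j : ℂ)‖) +
          Real.log 2 - ξ₂)|
      ≤ (‖((ξ₁ : ℂ) + (ξ₂ : ℂ) * Complex.I) - (Real.pi : ℂ) * (j : ℂ)‖) ^ 2 := by
  set z : ℂ := (ξ₁ : ℂ) + (ξ₂ : ℂ) * Complex.I with hz
  set w : ℂ := z - (Real.pi : ℂ) * (j : ℂ) with hw
  have hsin : ‖Complex.sin z‖ = ‖Complex.sin w‖ := by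
    have hzw : z = w + (j : ℂ) * (Real.pi : ℂ) := by rw [hw]; ring
    rw [hzw, Complex.sin_antiperiodic.add_int_mul_eq j, norm_mul]
    have hone : ‖((j.negOnePow : ℤ) : ℂ)‖ = 1 := by
      rcases Int.even_or_odd j with he | ho
      · simp [Int.negOnePow_even _ he]
      · simp [Int.negOnePow_odd _ ho]
    rw [hone, one_mul]
  have hdiff : boundaryLayerX (ξ₁, ξ₂) -
      (Real.log (‖w‖) + Real.log 2 - ξ₂) =
      Real.log (‖Complex.sin z‖) - Real.log (‖w‖) := by
    simp only [boundaryLayerX, hz]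
    ring
  rw [hdiff, hsin]
  exact log_sin_bound w h1 h2
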